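/- Let Γ be a homogeneous structure over a relational signature. Then the following are equivalent: (1) the age of Γ has the Ramsey property; (2) for every finite induced substructure B of Γ and every r ∈ ℕ there exists a finite induced substructure C of Γ such that for every family assigning to each induced substructure A of B a colouring χ_A of the embeddings of A into C with r colours, there exists an embedding e of B into C such that χ_A(e ∘ e₁) = χ_A(e ∘ e₂) for every induced substructure A of B and all embeddings e₁, e₂ of A into B. -/

import Mathlib

open FirstOrder FirstOrder.Language CategoryTheory

universe u v w

/-- The partition arrow `C → (B)^A_r`. -/
def RamseyArrow (L : FirstOrder.Language.{u, v}) (C B A : Type w)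
    [L.Structure C] [L.Structure B] [L.Structure A] (r : ℕ) : Prop :=
  ∀ χ : (A ↪[L] C) → Fin r, ∃ f : B ↪[L] C,
    ∀ e₁ e₂ : A ↪[L] B, χ (f.comp e₁) = χ (f.comp e₂)

/-- The age of `Γ`: the class of all finite structures that embed into `Γ`. -/
def FinAge (L : FirstOrder.Language.{u, v}) (Γ : Type w) [L.Structure Γ] :
    Set (Bundled.{w} L.Structure) :=
  {A | Finite A ∧ Nonempty (A ↪[L] Γ)}

/-- The Ramsey property for a class of finite structures. -/
def HasRamseyProperty (L : FirstOrder.Language.{u, v})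
    (K : Set (Bundled.{w} L.Structure)) : Prop :=
  ∀ A ∈ K, ∀ B ∈ K, ∀ r : ℕ, ∃ C ∈ K, RamseyArrow L C B A r

/-- `Γ` is homogeneous: any isomorphism between finite induced substructures (equivalently,
any two embeddings of a finite structure into `Γ`) extends to (differs by) an automorphism. -/
def IsHomogeneous (L : FirstOrder.Language.{u, v}) (Γ : Type w) [L.Structure Γ] : Prop :=
  ∀ A : Bundled.{w} L.Structure, Finite A → ∀ f g : A ↪[L] Γ,
    ∃ α : Γ ≃[L] Γ, ∀ a : A, α (f a) = g a

/-- Auxiliary: iterating the Ramsey property over a finite set of substructures. -/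
theorem ramsey_iterate (L : FirstOrder.Language.{u, v}) (Γ : Type w) [L.Structure Γ]
    (hRam : HasRamseyProperty L (FinAge L Γ)) (r : ℕ) :
    ∀ s : Finset (L.Substructure Γ), (∀ A ∈ s, Finite A) →
      ∀ D : Bundled.{w} L.Structure, D ∈ FinAge L Γ →
        ∃ C ∈ FinAge L Γ, ∀ χ : (A : L.Substructure Γ) → (A ↪[L] C) → Fin r,
          ∃ f : D ↪[L] C, ∀ A ∈ s, ∀ e₁ e₂ : A ↪[L] D,
            χ A (f.comp e₁) = χ A (f.comp e₂) := by
  classical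
  intro s
  induction s using Finset.induction_on with
  | empty =>
    intro _ D hD
    exact ⟨D, hD, fun χ => ⟨Embedding.refl L D, fun A hA => absurd hA (by simp)⟩⟩
  | @insert A₀ s hA₀s ih =>
    intro hfin D hD
    have hfinA₀ : Finite A₀ := hfin A₀ (Finset.mem_insert_self _ _)
    have hA₀age : (⟨A₀, inferInstance⟩ : Bundled.{w} L.Structure) ∈ FinAge L Γ :=
      ⟨hfinA₀, ⟨A₀.subtype⟩⟩
    obtain ⟨C, hC, hCprop⟩ := ih (fun A hA => hfin A (Finset.mem_insert_of_mem hA)) D hD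
    obtain ⟨C₂, hC₂, harr⟩ := hRam _ hA₀age C hC r
    refine ⟨C₂, hC₂, fun χ => ?_⟩
    obtain ⟨g, hg⟩ := harr (χ A₀)
    obtain ⟨f', hf'⟩ := hCprop (fun A v => χ A (g.comp v))
    refine ⟨g.comp f', fun A hA e₁ e₂ => ?_⟩
    rcases Finset.mem_insert.1 hA with rfl | hA
    · rw [Embedding.comp_assoc, Embedding.comp_assoc]; exact hg _ _
    · rw [Embedding.comp_assoc, Embedding.comp_assoc]; exact hf' A hA e₁ e₂

/-- For a homogeneous structure `Γ` over a relational signature, the age of `Γ` is Ramsey iff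
one can simultaneously stabilise colourings of the copies of all substructures `A` of a given
finite substructure `B` inside some finite substructure `C` of `Γ`. -/
theorem stmt5 (L : FirstOrder.Language.{u, v}) [L.IsRelational]
    (Γ : Type w) [L.Structure Γ] (hΓ : IsHomogeneous L Γ) :
    HasRamseyProperty L (FinAge L Γ) ↔
      ∀ B : L.Substructure Γ, Finite B → ∀ r : ℕ,
        ∃ C : L.Substructure Γ, Finite C ∧
          ∀ χ : (A : L.Substructure Γ) → (A ↪[L] C) → Fin r,
            ∃ e : B ↪[L] C,
              ∀ A : L.Substructure Γ, A ≤ B →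
                ∀ e₁ e₂ : A ↪[L] B, χ A (e.comp e₁) = χ A (e.comp e₂) := by
  classical
  constructor
  · intro hRam B hB r
    have hBset : ((B : Set Γ)).Finite := Set.toFinite _
    have hsub : {A : L.Substructure Γ | A ≤ B}.Finite := by
      refine Set.Finite.of_finite_image (f := fun A => (A : Set Γ))
        (hBset.finite_subsets.subset ?_) ?_
      · rintro _ ⟨A, hA, rfl⟩; exact hA
      · exact fun x _ y _ hxy => SetLike.coe_injective hxy
    have hfine : ∀ A ∈ hsub.toFinset, Finite A := by
      intro A hA
      have hAB : A ≤ B := by simpa using hA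
      exact (hBset.subset hAB).to_subtype
    have hDage : (⟨B, inferInstance⟩ : Bundled.{w} L.Structure) ∈ FinAge L Γ :=
      ⟨hB, ⟨B.subtype⟩⟩
    obtain ⟨C, hC, hCprop⟩ := ramsey_iterate L Γ hRam r hsub.toFinset hfine _ hDage
    obtain ⟨hCfin, ⟨ι⟩⟩ := hC
    have hrfin : Finite ι.toHom.range := by
      have : (Set.range ι).Finite := Set.finite_range ι
      have h2 : ((ι.toHom.range : L.Substructure Γ) : Set Γ) = Set.range ι := by
        ext x; simp [Hom.mem_range]
      rw [show ((ι.toHom.range : L.Substructure Γ) : Type w) = ↥((ι.toHom.range : L.Substructure Γ) : Set Γ) from rfl]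
      rw [h2]
      exact this.to_subtype
    refine ⟨ι.toHom.range, hrfin, ?_⟩
    intro χ'
    obtain ⟨f, hf⟩ := hCprop (fun A u => χ' A (ι.equivRange.toEmbedding.comp u))
    refine ⟨ι.equivRange.toEmbedding.comp f, fun A hAB e₁ e₂ => ?_⟩
    rw [Embedding.comp_assoc, Embedding.comp_assoc]
    exact hf A (by simpa using hAB) e₁ e₂
  · intro h A hA B hB r
    obtain ⟨hBfin, ⟨ιB⟩⟩ := hB
    have hB'fin : Finite ιB.toHom.range := by
      have : (Set.range ιB).Finite := Set.finite_range ιB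
      have h2 : ((ιB.toHom.range : L.Substructure Γ) : Set Γ) = Set.range ιB := by
        ext x; simp [Hom.mem_range]
      rw [show ((ιB.toHom.range : L.Substructure Γ) : Type w) = ↥((ιB.toHom.range : L.Substructure Γ) : Set Γ) from rfl]
      rw [h2]
      exact this.to_subtype
    obtain ⟨C', hC'fin, hC'⟩ := h ιB.toHom.range hB'fin (r + 1)
    refine ⟨⟨C', inferInstance⟩, ⟨hC'fin, ⟨C'.subtype⟩⟩, ?_⟩
    intro χ
    set χ' : (A' : L.Substructure Γ) → (A' ↪[L] C') → Fin (r + 1) :=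
      fun A' g => if hne : Nonempty ((A : Type w) ≃[L] A') then
        Fin.castSucc (χ (g.comp hne.some.toEmbedding)) else 0 with hχ'
    obtain ⟨e, he⟩ := hC' χ'
    refine ⟨e.comp ιB.equivRange.toEmbedding, fun e₁ e₂ => ?_⟩
    set k₁ : (A : Type w) ↪[L] ιB.toHom.range := ιB.equivRange.toEmbedding.comp e₁ with hk₁
    set k₂ : (A : Type w) ↪[L] ιB.toHom.range := ιB.equivRange.toEmbedding.comp e₂ with hk₂
    set m₁ : (A : Type w) ↪[L] Γ := (Substructure.subtype _).comp k₁ with hm₁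
    set A₀ : L.Substructure Γ := m₁.toHom.range with hA₀def
    have hA₀le : A₀ ≤ ιB.toHom.range := by
      intro x hx
      rw [hA₀def, Hom.mem_range] at hx
      obtain ⟨a, rfl⟩ := hx
      exact (k₁ a).2
    have hne : Nonempty ((A : Type w) ≃[L] A₀) := ⟨m₁.equivRange⟩
    set σ := hne.some with hσ
    have key : ∀ k : (A : Type w) ↪[L] ιB.toHom.range,
        χ' A₀ (e.comp (k.comp σ.symm.toEmbedding)) = Fin.castSucc (χ (e.comp k)) := by
      intro k
      rw [hχ']
      simp only [dif_pos hne]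
      congr 2
      ext a
      simp [Embedding.comp_apply]
      exact σ.symm_apply_apply a
    have := he A₀ hA₀le (k₁.comp σ.symm.toEmbedding) (k₂.comp σ.symm.toEmbedding)
    rw [key k₁, key k₂] at this
    have heq := Fin.castSucc_injective r this
    rw [Embedding.comp_assoc, Embedding.comp_assoc]
    exact heq
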